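/- (Model value gap, Lemma A.1 analogue) If two Markov transition kernels p̂ and p satisfy ‖p̂(·|s,a) - p(·|s,a)‖₁ ≤ α for all (s,a), the reward r has range Δr = max_s r(s) - min_s r(s), and the terminal value V has range ΔV = max_s V(s) - min_s V(s), then for any H-step policy π_H, the difference between its H-step return under p̂ and under p (with terminal reward γ^H V(s_H) and per-step discounted rewards γ^t r(s_t)) is bounded by γ·((1-γ^{H-1})/(1-γ)·Δr/2 + γ^{H-1}·ΔV/2)·α·H at every initial state. -/

import Mathlib

open Finset

section MDP

variable {S A : Type} [Fintype S] [Fintype A] [DecidableEq S]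

/-- `q` is a Markov transition kernel (pmf over next states for each state-action). -/
def IsKernel (q : S → A → S → ℝ) : Prop :=
  ∀ s a, (∀ s', 0 ≤ q s a s') ∧ (∑ s', q s a s') = 1

/-- A time-dependent stochastic policy sequence. -/
def IsPolicySeq (π : ℕ → S → A → ℝ) : Prop :=
  ∀ t s, (∀ a, 0 ≤ π t s a) ∧ (∑ a, π t s a) = 1

/-- A stationary stochastic policy. -/
def MDPIsStationary (π : S → A → ℝ) : Prop :=
  ∀ s, (∀ a, 0 ≤ π s a) ∧ (∑ a, π s a) = 1

/-- H-step value `E[γ^H V(s_H) + ∑_{t<H} γ^t r(s_t)]` of a time-dependent policy under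
kernel `q`, with terminal value `V`. -/
noncomputable def valH (q : S → A → S → ℝ) (r : S → ℝ) (γ : ℝ) (V : S → ℝ) :
    ℕ → (ℕ → S → A → ℝ) → S → ℝ
  | 0, _, s => V s
  | H + 1, π, s =>
      r s + γ * ∑ a, π 0 s a * ∑ s', q s a s' * valH q r γ V H (fun t => π (t + 1)) s'

/-- Optimal H-step value: supremum over H-step (time-dependent stochastic) policies. -/
noncomputable def VHopt (q : S → A → S → ℝ) (r : S → ℝ) (γ : ℝ) (V : S → ℝ)
    (H : ℕ) (s : S) : ℝ :=
  sSup {x | ∃ π, IsPolicySeq π ∧ valH q r γ V H π s = x}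

/-- One step of the state-distribution dynamics induced by kernel `q` and stationary
policy `π`. -/
noncomputable def pushforward (q : S → A → S → ℝ) (π : S → A → ℝ) (μ : S → ℝ) : S → ℝ :=
  fun s' => ∑ s, μ s * ∑ a, π s a * q s a s'

/-- Distribution of the state at time `t` of the Markov chain induced by `π` from `s₀`. -/
noncomputable def stateDist (q : S → A → S → ℝ) (π : S → A → ℝ) (s0 : S) (t : ℕ) :
    S → ℝ :=
  (pushforward q π)^[t] (fun s => if s = s0 then 1 else 0)

/-- Infinite-horizon discounted value of stationary policy `π` from `s₀`. -/
noncomputable def Vinf (q : S → A → S → ℝ) (r : S → ℝ) (γ : ℝ) (π : S → A → ℝ)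
    (s0 : S) : ℝ :=
  ∑' t : ℕ, γ ^ t * ∑ s, stateDist q π s0 t s * r s

/-- Optimal infinite-horizon discounted value. -/
noncomputable def Vstar (q : S → A → S → ℝ) (r : S → ℝ) (γ : ℝ) (s0 : S) : ℝ :=
  sSup {x | ∃ π, MDPIsStationary π ∧ Vinf q r γ π s0 = x}

end MDP

section AuxLemmas

/-- Convex combination stays within bounds. -/
lemma aux_comb_bound {ι : Type} [Fintype ι] (w g : ι → ℝ) (m M : ℝ)
    (hw0 : ∀ i, 0 ≤ w i) (hw1 : ∑ i, w i = 1)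
    (hg : ∀ i, m ≤ g i ∧ g i ≤ M) :
    m ≤ ∑ i, w i * g i ∧ ∑ i, w i * g i ≤ M := by
  constructor
  · have h1 : ∑ i, w i * m ≤ ∑ i, w i * g i :=
      Finset.sum_le_sum fun i _ => mul_le_mul_of_nonneg_left (hg i).1 (hw0 i)
    have h2 : ∑ i, w i * m = m := by rw [← Finset.sum_mul, hw1, one_mul]
    linarith
  · have h1 : ∑ i, w i * g i ≤ ∑ i, w i * M :=
      Finset.sum_le_sum fun i _ => mul_le_mul_of_nonneg_left (hg i).2 (hw0 i)
    have h2 : ∑ i, w i * M = M := by rw [← Finset.sum_mul, hw1, one_mul]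
    linarith

/-- L1 / range pairing bound. -/
lemma aux_pair_bound {ι : Type} [Fintype ι] [Nonempty ι] (w w2 f : ι → ℝ) (m M α : ℝ)
    (hw1 : ∑ i, w i = 1) (hw21 : ∑ i, w2 i = 1)
    (hf : ∀ i, m ≤ f i ∧ f i ≤ M)
    (hα : ∑ i, |w2 i - w i| ≤ α) :
    |∑ i, w2 i * f i - ∑ i, w i * f i| ≤ α * ((M - m) / 2) := by
  obtain ⟨i0⟩ := ‹Nonempty ι›
  have hmM : m ≤ M := le_trans (hf i0).1 (hf i0).2
  set c := (M + m) / 2 with hc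
  have key : ∑ i, w2 i * f i - ∑ i, w i * f i = ∑ i, (w2 i - w i) * (f i - c) := by
    have e2 : ∀ i, (w2 i - w i) * (f i - c)
        = (w2 i * f i - w i * f i) - (w2 i * c - w i * c) := fun i => by ring
    rw [Finset.sum_congr rfl fun i _ => e2 i, Finset.sum_sub_distrib, Finset.sum_sub_distrib,
      Finset.sum_sub_distrib, ← Finset.sum_mul, ← Finset.sum_mul, hw1, hw21]
    ring
  rw [key]
  calc |∑ i, (w2 i - w i) * (f i - c)| ≤ ∑ i, |(w2 i - w i) * (f i - c)| :=
        Finset.abs_sum_le_sum_abs _ _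
    _ = ∑ i, |w2 i - w i| * |f i - c| := by simp [abs_mul]
    _ ≤ ∑ i, |w2 i - w i| * ((M - m) / 2) := by
        refine Finset.sum_le_sum fun i _ => mul_le_mul_of_nonneg_left ?_ (abs_nonneg _)
        rw [abs_le]
        constructor
        · have := (hf i).1; rw [hc]; linarith
        · have := (hf i).2; rw [hc]; linarith
    _ = (∑ i, |w2 i - w i|) * ((M - m) / 2) := by rw [← Finset.sum_mul]
    _ ≤ α * ((M - m) / 2) := mul_le_mul_of_nonneg_right hα (by linarith)

/-- Uniform bounds on the H-step value. -/
lemma aux_valH_bounds {S A : Type} [Fintype S] [Fintype A] [DecidableEq S]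
    (q : S → A → S → ℝ) (hq : IsKernel q) (r V : S → ℝ) (γ : ℝ) (hγ0 : 0 ≤ γ)
    (rm rM Vm VM : ℝ) (hr : ∀ s, rm ≤ r s ∧ r s ≤ rM) (hV : ∀ s, Vm ≤ V s ∧ V s ≤ VM) :
    ∀ (h : ℕ) (π : ℕ → S → A → ℝ), IsPolicySeq π → ∀ s,
      (∑ t ∈ Finset.range h, γ ^ t) * rm + γ ^ h * Vm ≤ valH q r γ V h π s ∧
      valH q r γ V h π s ≤ (∑ t ∈ Finset.range h, γ ^ t) * rM + γ ^ h * VM := by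
  intro h
  induction h with
  | zero => intro π hπ s; simpa [valH] using hV s
  | succ n ih =>
    intro π hπ s
    have hπ' : IsPolicySeq fun t => π (t + 1) := fun t s => hπ (t + 1) s
    have hinner : ∀ a,
        (∑ t ∈ Finset.range n, γ ^ t) * rm + γ ^ n * Vm ≤
          ∑ s', q s a s' * valH q r γ V n (fun t => π (t + 1)) s' ∧
        ∑ s', q s a s' * valH q r γ V n (fun t => π (t + 1)) s' ≤
          (∑ t ∈ Finset.range n, γ ^ t) * rM + γ ^ n * VM :=
      fun a => aux_comb_bound _ _ _ _ (hq s a).1 (hq s a).2 fun s' => ih _ hπ' s'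
    have houter :
        (∑ t ∈ Finset.range n, γ ^ t) * rm + γ ^ n * Vm ≤
          ∑ a, π 0 s a * ∑ s', q s a s' * valH q r γ V n (fun t => π (t + 1)) s' ∧
        ∑ a, π 0 s a * ∑ s', q s a s' * valH q r γ V n (fun t => π (t + 1)) s' ≤
          (∑ t ∈ Finset.range n, γ ^ t) * rM + γ ^ n * VM :=
      aux_comb_bound (π 0 s) _ _ _ (hπ 0 s).1 (hπ 0 s).2 hinner
    have hgs : ∑ t ∈ Finset.range (n + 1), γ ^ t = γ * ∑ t ∈ Finset.range n, γ ^ t + 1 :=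
      geom_sum_succ
    have hlo := mul_le_mul_of_nonneg_left houter.1 hγ0
    have hhi := mul_le_mul_of_nonneg_left houter.2 hγ0
    have hrs := hr s
    simp only [valH]
    rw [hgs, pow_succ]
    constructor
    · nlinarith [hlo, hrs.1]
    · nlinarith [hhi, hrs.2]

end AuxLemmas

/-- Main induction: model value gap at each horizon. -/
lemma aux_main {S A : Type} [Fintype S] [Fintype A] [DecidableEq S]
    [Nonempty S] [Nonempty A]
    (phat p : S → A → S → ℝ) (hphat : IsKernel phat) (hp : IsKernel p)
    (r V : S → ℝ) (γ : ℝ) (hγ0 : 0 ≤ γ) (hγ1 : γ < 1)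
    (α : ℝ) (hα : ∀ s a, (∑ s', |phat s a s' - p s a s'|) ≤ α)
    (rm rM Vm VM : ℝ) (hr : ∀ s, rm ≤ r s ∧ r s ≤ rM) (hV : ∀ s, Vm ≤ V s ∧ V s ≤ VM) :
    ∀ (h : ℕ) (π : ℕ → S → A → ℝ), IsPolicySeq π → ∀ s,
      |valH phat r γ V h π s - valH p r γ V h π s| ≤
        α / 2 * ((rM - rm) * (γ * (1 - γ ^ h) / (1 - γ) - h * γ ^ h) / (1 - γ)
          + (VM - Vm) * h * γ ^ h) := by
  have hne : (1 : ℝ) - γ ≠ 0 := by linarith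
  have hne' : γ - 1 ≠ 0 := by linarith
  have hγne : γ ≠ 1 := by linarith
  intro h
  induction h with
  | zero => intro π hπ s; simp [valH]
  | succ n ih =>
    intro π hπ s
    have hπ' : IsPolicySeq fun t => π (t + 1) := fun t s => hπ (t + 1) s
    set Fn : ℝ := α / 2 * ((rM - rm) * (γ * (1 - γ ^ n) / (1 - γ) - n * γ ^ n) / (1 - γ)
      + (VM - Vm) * n * γ ^ n) with hFn
    set va : S → ℝ := valH phat r γ V n fun t => π (t + 1) with hva
    set v : S → ℝ := valH p r γ V n fun t => π (t + 1) with hv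
    set Sn : ℝ := ∑ t ∈ Finset.range n, γ ^ t with hSn
    -- bound on each action's next-state expectation difference
    have hX : ∀ a, |∑ s', phat s a s' * va s' - ∑ s', p s a s' * v s'| ≤
        Fn + α * ((Sn * rM + γ ^ n * VM - (Sn * rm + γ ^ n * Vm)) / 2) := by
      intro a
      have h1 : |∑ s', phat s a s' * va s' - ∑ s', phat s a s' * v s'| ≤ Fn := by
        have e : ∑ s', phat s a s' * va s' - ∑ s', phat s a s' * v s'
            = ∑ s', phat s a s' * (va s' - v s') := by
          rw [← Finset.sum_sub_distrib]; congr 1; ext s'; ring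
        rw [e]
        calc |∑ s', phat s a s' * (va s' - v s')|
            ≤ ∑ s', |phat s a s' * (va s' - v s')| := Finset.abs_sum_le_sum_abs _ _
          _ = ∑ s', phat s a s' * |va s' - v s'| := by
              refine Finset.sum_congr rfl fun s' _ => ?_
              rw [abs_mul, abs_of_nonneg ((hphat s a).1 s')]
          _ ≤ ∑ s', phat s a s' * Fn :=
              Finset.sum_le_sum fun s' _ =>
                mul_le_mul_of_nonneg_left (ih _ hπ' s') ((hphat s a).1 s')
          _ = Fn := by rw [← Finset.sum_mul, (hphat s a).2, one_mul]
      have h2 : |∑ s', phat s a s' * v s' - ∑ s', p s a s' * v s'| ≤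
          α * ((Sn * rM + γ ^ n * VM - (Sn * rm + γ ^ n * Vm)) / 2) :=
        aux_pair_bound (p s a) (phat s a) v _ _ α (hp s a).2 (hphat s a).2
          (fun s' => aux_valH_bounds p hp r V γ hγ0 rm rM Vm VM hr hV n _ hπ' s')
          (hα s a)
      calc |∑ s', phat s a s' * va s' - ∑ s', p s a s' * v s'|
          ≤ |∑ s', phat s a s' * va s' - ∑ s', phat s a s' * v s'|
            + |∑ s', phat s a s' * v s' - ∑ s', p s a s' * v s'| := abs_sub_le _ _ _
        _ ≤ _ := add_le_add h1 h2
    set Bnd : ℝ := Fn + α * ((Sn * rM + γ ^ n * VM - (Sn * rm + γ ^ n * Vm)) / 2) with hBnd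
    have hdiff : valH phat r γ V (n + 1) π s - valH p r γ V (n + 1) π s
        = γ * ∑ a, π 0 s a * (∑ s', phat s a s' * va s' - ∑ s', p s a s' * v s') := by
      show (r s + γ * ∑ a, π 0 s a * ∑ s', phat s a s' * va s')
          - (r s + γ * ∑ a, π 0 s a * ∑ s', p s a s' * v s') = _
      have e2 : ∀ a : A, π 0 s a * (∑ s', phat s a s' * va s' - ∑ s', p s a s' * v s')
          = π 0 s a * ∑ s', phat s a s' * va s' - π 0 s a * ∑ s', p s a s' * v s' :=
        fun a => by ring
      rw [Finset.sum_congr rfl fun a _ => e2 a, Finset.sum_sub_distrib]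
      ring
    have hbody : |valH phat r γ V (n + 1) π s - valH p r γ V (n + 1) π s| ≤ γ * Bnd := by
      rw [hdiff, abs_mul, abs_of_nonneg hγ0]
      refine mul_le_mul_of_nonneg_left ?_ hγ0
      calc |∑ a, π 0 s a * (∑ s', phat s a s' * va s' - ∑ s', p s a s' * v s')|
          ≤ ∑ a, |π 0 s a * (∑ s', phat s a s' * va s' - ∑ s', p s a s' * v s')| :=
            Finset.abs_sum_le_sum_abs _ _
        _ = ∑ a, π 0 s a * |∑ s', phat s a s' * va s' - ∑ s', p s a s' * v s'| := by
            refine Finset.sum_congr rfl fun a _ => ?_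
            rw [abs_mul, abs_of_nonneg ((hπ 0 s).1 a)]
        _ ≤ ∑ a, π 0 s a * Bnd :=
            Finset.sum_le_sum fun a _ => mul_le_mul_of_nonneg_left (hX a) ((hπ 0 s).1 a)
        _ = Bnd := by rw [← Finset.sum_mul, (hπ 0 s).2, one_mul]
    refine le_trans hbody (le_of_eq ?_)
    rw [hBnd, hFn, hSn, geom_sum_eq hγne]
    push_cast
    field_simp
    ring

/-- Model value gap, Lemma A.1 analogue: if `‖p̂(·|s,a) - p(·|s,a)‖₁ ≤ α`
for all `(s,a)`, then for any H-step policy the H-step returns under `p̂` and `p`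
differ by at most `γ((1-γ^{H-1})/(1-γ)·Δr/2 + γ^{H-1}·ΔV/2)·α·H` at every state. -/
theorem stmt_4 {S A : Type} [Fintype S] [Fintype A] [DecidableEq S]
    [Nonempty S] [Nonempty A]
    (phat p : S → A → S → ℝ) (hphat : IsKernel phat) (hp : IsKernel p)
    (r V : S → ℝ) (γ : ℝ) (hγ0 : 0 ≤ γ) (hγ1 : γ < 1)
    (α : ℝ) (hα : ∀ s a, (∑ s', |phat s a s' - p s a s'|) ≤ α)
    (Δr ΔV : ℝ)
    (hΔr : Δr = (⨆ s, r s) - ⨅ s, r s)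
    (hΔV : ΔV = (⨆ s, V s) - ⨅ s, V s)
    (H : ℕ) (hH : 1 ≤ H) :
    ∀ πH : ℕ → S → A → ℝ, IsPolicySeq πH → ∀ s : S,
      |valH phat r γ V H πH s - valH p r γ V H πH s| ≤
        γ * ((1 - γ ^ (H - 1)) / (1 - γ) * (Δr / 2) + γ ^ (H - 1) * (ΔV / 2)) * α * H := by
  have hne : (1 : ℝ) - γ ≠ 0 := by linarith
  have hγne : γ ≠ 1 := by linarith
  have h1γ : (0 : ℝ) < 1 - γ := by linarith
  obtain ⟨n, hn⟩ : ∃ n, H = n + 1 := ⟨H - 1, (Nat.succ_pred_eq_of_pos hH).symm⟩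
  subst hn
  set rm : ℝ := ⨅ s, r s with hrm
  set rM : ℝ := ⨆ s, r s with hrM
  set Vm : ℝ := ⨅ s, V s with hVm
  set VM : ℝ := ⨆ s, V s with hVM
  have hr : ∀ s, rm ≤ r s ∧ r s ≤ rM := fun s =>
    ⟨ciInf_le (Finite.bddBelow_range r) s, le_ciSup (Finite.bddAbove_range r) s⟩
  have hV' : ∀ s, Vm ≤ V s ∧ V s ≤ VM := fun s =>
    ⟨ciInf_le (Finite.bddBelow_range V) s, le_ciSup (Finite.bddAbove_range V) s⟩
  obtain ⟨s₀⟩ := ‹Nonempty S›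
  obtain ⟨a₀⟩ := ‹Nonempty A›
  have hα0 : 0 ≤ α :=
    le_trans (Finset.sum_nonneg fun _ _ => abs_nonneg _) (hα s₀ a₀)
  have hΔr0 : 0 ≤ rM - rm := by have := hr s₀; linarith
  intro π hπ s
  have hmain := aux_main phat p hphat hp r V γ hγ0 hγ1 α hα rm rM Vm VM hr hV' (n + 1) π hπ s
  refine le_trans hmain ?_
  rw [hΔr, hΔV]
  simp only [Nat.add_sub_cancel]
  -- key geometric-sum inequality: (1 - γ^(n+1))/(1-γ) ≤ n+1
  have hgeom : (1 - γ ^ (n + 1)) / (1 - γ) = ∑ t ∈ Finset.range (n + 1), γ ^ t := by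
    rw [geom_sum_eq hγne, div_eq_div_iff hne (by linarith : γ - 1 ≠ 0)]
    ring
  have hsum_le : (1 - γ ^ (n + 1)) / (1 - γ) ≤ (n + 1 : ℝ) := by
    rw [hgeom]
    calc ∑ t ∈ Finset.range (n + 1), γ ^ t ≤ ∑ _t ∈ Finset.range (n + 1), (1 : ℝ) :=
          Finset.sum_le_sum fun t _ => pow_le_one₀ hγ0 hγ1.le
      _ = (n + 1 : ℝ) := by simp
  have hG : γ * (1 - γ ^ (n + 1)) / (1 - γ) ≤ (n + 1 : ℝ) * γ := by
    rw [mul_div_assoc]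
    calc γ * ((1 - γ ^ (n + 1)) / (1 - γ)) ≤ γ * (n + 1 : ℝ) :=
          mul_le_mul_of_nonneg_left hsum_le hγ0
      _ = (n + 1 : ℝ) * γ := by ring
  set c : ℝ := α / 2 * ((rM - rm) / (1 - γ)) with hc
  have hc0 : 0 ≤ c := by
    apply mul_nonneg (by linarith) (div_nonneg hΔr0 h1γ.le)
  have hL : α / 2 * ((rM - rm) * (γ * (1 - γ ^ (n + 1)) / (1 - γ) - (↑(n + 1)) * γ ^ (n + 1)) / (1 - γ)
        + (VM - Vm) * (↑(n + 1)) * γ ^ (n + 1))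
      = c * (γ * (1 - γ ^ (n + 1)) / (1 - γ) - (↑(n + 1)) * γ ^ (n + 1))
        + α / 2 * ((VM - Vm) * (↑(n + 1)) * γ ^ (n + 1)) := by
    rw [hc]; field_simp
  have hR : γ * ((1 - γ ^ n) / (1 - γ) * ((rM - rm) / 2) + γ ^ n * ((VM - Vm) / 2)) * α * (↑(n + 1))
      = c * ((↑(n + 1)) * γ - (↑(n + 1)) * γ ^ (n + 1))
        + α / 2 * ((VM - Vm) * (↑(n + 1)) * γ ^ (n + 1)) := by
    rw [hc]; field_simp; ring
  rw [hL, hR]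
  have hmul : c * (γ * (1 - γ ^ (n + 1)) / (1 - γ) - (↑(n + 1)) * γ ^ (n + 1))
      ≤ c * ((↑(n + 1)) * γ - (↑(n + 1)) * γ ^ (n + 1)) := by
    apply mul_le_mul_of_nonneg_left _ hc0
    push_cast
    push_cast at hG
    linarith
  linarith
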